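/- Let Y be a closed subspace of a Banach space X. Suppose the triplet (X**, B_{Y⊥⊥}, K(X)) has property-(P₁), i.e., for every nonempty compact F ⊆ X, cent_{B_{Y⊥⊥}}(F) ≠ ∅ and for every ε > 0 there is δ > 0 with cent_{B_{Y⊥⊥}}(F,δ) ⊆ cent_{B_{Y⊥⊥}}(F) + εB_{X**}. Then (X, B_Y, K(X)) has property-(P₁): for every nonempty compact F ⊆ X, cent_{B_Y}(F) ≠ ∅ and for every ε > 0 there is δ > 0 with cent_{B_Y}(F,δ) ⊆ cent_{B_Y}(F) + εB_X. -/

import Mathlib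

set_option maxHeartbeats 1600000

open Metric Set Pointwise

/-- `r(x,B) = sup_{b ∈ B} ‖x - b‖`. -/
noncomputable def chebR {X : Type*} [NormedAddCommGroup X] (x : X) (B : Set X) : ℝ :=
  ⨆ b : B, ‖x - (b : X)‖

/-- `rad_V(B) = inf_{v ∈ V} r(v,B)`, the restricted Chebyshev radius. -/
noncomputable def chebRad {X : Type*} [NormedAddCommGroup X] (V B : Set X) : ℝ :=
  ⨅ v : V, chebR (v : X) B

/-- `cent_V(B)`, the set of restricted Chebyshev centers of `B` w.r.t. `V`. -/
noncomputable def chebCent {X : Type*} [NormedAddCommGroup X] (V B : Set X) : Set X :=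
  {v ∈ V | chebR v B ≤ chebRad V B}

/-- `cent_V(B,δ) = {v ∈ V : r(v,B) ≤ rad_V(B) + δ}`. -/
noncomputable def chebCentA {X : Type*} [NormedAddCommGroup X] (V B : Set X) (δ : ℝ) : Set X :=
  {v ∈ V | chebR v B ≤ chebRad V B + δ}

/-- Property-(P₁) of `(Z,V,{F})`. -/
def propP1 {Z : Type*} [NormedAddCommGroup Z] [NormedSpace ℝ Z] (V F : Set Z) : Prop :=
  (chebCent V F).Nonempty ∧
    ∀ ε > (0 : ℝ), ∃ δ > (0 : ℝ), chebCentA V F δ ⊆ chebCent V F + ε • closedBall (0 : Z) 1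

open NormedSpace in
/-- The double annihilator `Y⊥⊥` of `Y`, as a subset of the bidual `X**`. -/
def biann {X : Type*} [NormedAddCommGroup X] [NormedSpace ℝ X] (Y : Submodule ℝ X) :
    Set (StrongDual ℝ (StrongDual ℝ X)) :=
  {Φ | ∀ f : StrongDual ℝ X, (∀ y ∈ Y, f y = 0) → Φ f = 0}

/-! ### Auxiliary lemmas -/

section Plumbing

variable {Z : Type*} [NormedAddCommGroup Z]

lemma chebR_nonneg (v : Z) (B : Set Z) : 0 ≤ chebR v B :=
  Real.iSup_nonneg fun _ => norm_nonneg _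

lemma chebR_le' {B : Set Z} (hne : B.Nonempty) {v : Z} {c : ℝ}
    (h : ∀ b ∈ B, ‖v - b‖ ≤ c) : chebR v B ≤ c := by
  haveI : Nonempty B := hne.to_subtype
  exact ciSup_le fun b => h b b.2

lemma le_chebR' {B : Set Z} (hB : ∃ M, ∀ b ∈ B, ‖b‖ ≤ M) {v b : Z}
    (hb : b ∈ B) : ‖v - b‖ ≤ chebR v B := by
  obtain ⟨M, hM⟩ := hB
  refine le_ciSup (f := fun b : B => ‖v - (b : Z)‖) ⟨‖v‖ + M, ?_⟩ ⟨b, hb⟩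
  rintro t ⟨p, rfl⟩
  calc ‖v - (p : Z)‖ ≤ ‖v‖ + ‖(p : Z)‖ := norm_sub_le _ _
    _ ≤ ‖v‖ + M := by have := hM p p.2; linarith

lemma chebRad_le' {V B : Set Z} {v : Z} (hv : v ∈ V) : chebRad V B ≤ chebR v B := by
  refine ciInf_le ?_ (⟨v, hv⟩ : V)
  refine ⟨0, ?_⟩
  rintro t ⟨p, rfl⟩
  exact chebR_nonneg _ _

end Plumbing

section Dual

open NormedSpace

variable {X : Type*} [NormedAddCommGroup X] [NormedSpace ℝ X]

lemma Jnorm (z : X) : ‖inclusionInDoubleDual ℝ X z‖ = ‖z‖ :=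
  (inclusionInDoubleDualLi ℝ (E := X)).norm_map z

lemma Jdist (v x : X) :
    ‖inclusionInDoubleDual ℝ X v - inclusionInDoubleDual ℝ X x‖ = ‖v - x‖ := by
  rw [← map_sub, Jnorm]

lemma chebR_image (v : X) (F : Set X) :
    chebR (inclusionInDoubleDual ℝ X v) (inclusionInDoubleDual ℝ X '' F) = chebR v F := by
  have h : Set.range (fun b : (inclusionInDoubleDual ℝ X '' F) =>
      ‖inclusionInDoubleDual ℝ X v - (b : StrongDual ℝ (StrongDual ℝ X))‖)
      = Set.range (fun b : F => ‖v - (b : X)‖) := by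
    ext t
    constructor
    · rintro ⟨⟨b, x0, hx0, rfl⟩, rfl⟩
      exact ⟨⟨x0, hx0⟩, (Jdist v x0).symm⟩
    · rintro ⟨⟨b, hb⟩, rfl⟩
      exact ⟨⟨_, mem_image_of_mem _ hb⟩, Jdist v b⟩
  rw [chebR, chebR, iSup, iSup, h]

lemma dual_attain (g : X →L[ℝ] ℝ) {σ : ℝ} (hσ : 0 < σ) :
    ∃ v : X, ‖v‖ ≤ 1 ∧ ‖g‖ - σ ≤ g v := by
  by_contra h
  push_neg at h
  have h0 := h 0 (by simp)
  rw [map_zero] at h0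
  have hb : ∀ v : X, ‖g v‖ ≤ (‖g‖ - σ) * ‖v‖ := by
    intro v
    rcases eq_or_ne v 0 with rfl | hv
    · simp
    · have hnv : (0:ℝ) < ‖v‖ := norm_pos_iff.2 hv
      have h1 := h (‖v‖⁻¹ • v) (by rw [norm_smul]; simp [abs_of_nonneg, inv_nonneg.2 hnv.le,
        inv_mul_cancel₀ hnv.ne'])
      have h2 := h (-(‖v‖⁻¹ • v)) (by rw [norm_neg, norm_smul]; simp [abs_of_nonneg,
        inv_nonneg.2 hnv.le, inv_mul_cancel₀ hnv.ne'])
      rw [map_neg] at h2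
      rw [map_smul] at h1 h2
      have habs : |g v| ≤ (‖g‖ - σ) * ‖v‖ := by
        rw [abs_le]
        constructor
        · have h2' : -(‖v‖⁻¹ * g v) < ‖g‖ - σ := by simpa using h2
          rw [inv_mul_eq_div, ← neg_div, div_lt_iff₀ hnv] at h2'
          linarith
        · have h1' : ‖v‖⁻¹ * g v < ‖g‖ - σ := by simpa using h1
          rw [inv_mul_eq_div, div_lt_iff₀ hnv] at h1'
          linarith
      simpa [Real.norm_eq_abs] using habs
  have := ContinuousLinearMap.opNorm_le_bound g (by linarith) hb
  linarith

lemma biann_key (Y : Submodule ℝ X)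
    {Φ : StrongDual ℝ (StrongDual ℝ X)} (hΦ : Φ ∈ biann Y) (g : StrongDual ℝ X) :
    |Φ g| ≤ ‖Φ‖ * ‖g.comp Y.subtypeL‖ := by
  obtain ⟨G, hGext, hGnorm⟩ := exists_extension_norm_eq Y (g.comp Y.subtypeL)
  have hzero : ∀ y ∈ Y, (g - G) y = 0 := by
    intro y hy
    have := hGext ⟨y, hy⟩
    simp only [ContinuousLinearMap.sub_apply]
    rw [this]
    simp [ContinuousLinearMap.comp_apply]
  have hΦ0 : Φ (g - G) = 0 := hΦ _ hzero
  have heq : Φ g = Φ G := by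
    have h2 := map_sub Φ g G
    rw [hΦ0] at h2
    linarith
  rw [heq, ← hGnorm]
  have := Φ.le_opNorm G
  simpa [Real.norm_eq_abs] using this

/-- single coordinate inclusion as a continuous linear map -/
noncomputable def sCLM {ι : Type*} [Fintype ι] [DecidableEq ι] (i : ι) : X →L[ℝ] (ι → X) :=
  (LinearMap.single ℝ (fun _ : ι => X) i).mkContinuous 1
    (fun v => by simp [LinearMap.single_apply, Pi.norm_single])

@[simp] lemma sCLM_apply {ι : Type*} [Fintype ι] [DecidableEq ι] (i : ι) (v : X) :
    sCLM i v = Pi.single i v := rfl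

/-- The crucial Helly-type / local-reflexivity-type lemma: finitely many balls centred in `X`
which meet `B_{Y⊥⊥}` in the bidual meet `B_Y` after an `ε`-enlargement. -/
lemma lemA (Y : Submodule ℝ X)
    {Φ : StrongDual ℝ (StrongDual ℝ X)} (hΦb : Φ ∈ biann Y) (hΦn : ‖Φ‖ ≤ 1)
    {ι : Type*} [Fintype ι] (x : ι → X) (rad : ι → ℝ)
    (hrad : ∀ i, ‖Φ - inclusionInDoubleDual ℝ X (x i)‖ ≤ rad i)
    {ε : ℝ} (hε : 0 < ε) :
    ∃ y, y ∈ Y ∧ ‖y‖ ≤ 1 ∧ ∀ i, ‖y - x i‖ ≤ rad i + ε := by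
  classical
  by_contra hcon
  push_neg at hcon
  have hrad0 : ∀ i, 0 ≤ rad i := fun i => le_trans (norm_nonneg (Φ - inclusionInDoubleDual ℝ X (x i))) (hrad i)
  set J := inclusionInDoubleDual ℝ X with hJ
  set A : Set (ι → X) := (fun y => fun i => y - x i) '' {y : X | y ∈ Y ∧ ‖y‖ ≤ 1} with hA
  set Bs : Set (ι → X) := Set.univ.pi (fun i => ball (0 : X) (rad i + ε)) with hBs
  have hAconv : Convex ℝ A := by
    rintro a ⟨y1, ⟨hy1, hn1⟩, rfl⟩ b ⟨y2, ⟨hy2, hn2⟩, rfl⟩ p q hp hq hpq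
    refine ⟨p • y1 + q • y2, ⟨Y.add_mem (Y.smul_mem _ hy1) (Y.smul_mem _ hy2), ?_⟩, ?_⟩
    · calc ‖p • y1 + q • y2‖ ≤ ‖p • y1‖ + ‖q • y2‖ := norm_add_le _ _
        _ = p * ‖y1‖ + q * ‖y2‖ := by
            rw [norm_smul, norm_smul, Real.norm_eq_abs, Real.norm_eq_abs,
              abs_of_nonneg hp, abs_of_nonneg hq]
        _ ≤ p * 1 + q * 1 := by
            have := mul_le_mul_of_nonneg_left hn1 hp
            have := mul_le_mul_of_nonneg_left hn2 hq
            linarith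
        _ = 1 := by linarith
    · funext i
      simp only [Pi.add_apply, Pi.smul_apply, smul_eq_mul]
      show (p • y1 + q • y2) - x i = p • (y1 - x i) + q • (y2 - x i)
      have h1 : (p + q) • x i = x i := by rw [hpq, one_smul]
      calc (p • y1 + q • y2) - x i = (p • y1 + q • y2) - (p + q) • x i := by rw [h1]
        _ = p • (y1 - x i) + q • (y2 - x i) := by rw [add_smul, smul_sub, smul_sub]; abel
  have hBconv : Convex ℝ Bs := convex_pi fun i _ => convex_ball _ _
  have hBopen : IsOpen Bs := isOpen_set_pi finite_univ fun i _ => isOpen_ball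
  have hdisj : Disjoint Bs A := by
    rw [Set.disjoint_left]
    rintro w hwB ⟨y, ⟨hyY, hy1⟩, rfl⟩
    obtain ⟨i, hi⟩ := hcon y hyY hy1
    rw [hBs, Set.mem_univ_pi] at hwB
    have h2 := hwB i
    rw [mem_ball_zero_iff] at h2
    simp only at h2
    linarith
  obtain ⟨f, u, hfB, hfA⟩ := geometric_hahn_banach_open hBconv hBopen hAconv hdisj
  set cg : ι → (X →L[ℝ] ℝ) := fun i => f.comp (sCLM i) with hcg
  have hdecomp : ∀ w : ι → X, f w = ∑ i, cg i (w i) := by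
    intro w
    conv_lhs => rw [← Finset.univ_sum_single w]
    rw [map_sum]
    exact Finset.sum_congr rfl fun i _ => rfl
  set g : StrongDual ℝ X := ∑ i, cg i with hg
  have hgapp : ∀ v : X, g v = ∑ i, cg i v := by
    intro v
    simp [hg, ContinuousLinearMap.sum_apply]
  set c : ℝ := ∑ i, cg i (x i) with hc
  set S : ℝ := ∑ i, ‖cg i‖ with hS
  set M : ℝ := ∑ i, (‖cg i‖ + (rad i + ε)) with hM
  have hS0 : 0 ≤ S := Finset.sum_nonneg fun i _ => norm_nonneg _
  have hM0 : 0 ≤ M := Finset.sum_nonneg fun i _ => by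
    have := norm_nonneg (cg i); have := hrad0 i; linarith
  -- A side
  have hAy : ∀ y : X, y ∈ Y → ‖y‖ ≤ 1 → u + c ≤ g y := by
    intro y hy hn
    have h1 := hfA _ ⟨y, ⟨hy, hn⟩, rfl⟩
    rw [hdecomp] at h1
    have h2 : ∑ i, cg i (y - x i) = g y - c := by
      rw [hgapp, hc, ← Finset.sum_sub_distrib]
      exact Finset.sum_congr rfl fun i _ => map_sub (cg i) y (x i)
    rw [h2] at h1
    linarith
  -- B side
  have hBside : ∀ σ : ℝ, 0 < σ → σ < ε →
      (∑ i, (rad i + ε) * ‖cg i‖) - σ * M - σ * 0 ≤ u := by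
    intro σ hσ0 hσε
    choose v hv1 hv2 using fun i => dual_attain (cg i) hσ0
    set w : ι → X := fun i => (rad i + ε - σ) • v i with hw
    have hwB : w ∈ Bs := by
      rw [hBs, Set.mem_univ_pi]
      intro i
      rw [mem_ball_zero_iff, hw]
      simp only
      rw [norm_smul, Real.norm_eq_abs, abs_of_nonneg (by have := hrad0 i; linarith)]
      nlinarith [hv1 i, hrad0 i, norm_nonneg (v i)]
    have hfw := hfB w hwB
    rw [hdecomp] at hfw
    have hterm : ∀ i ∈ Finset.univ, (rad i + ε) * ‖cg i‖ - σ * (‖cg i‖ + (rad i + ε))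
        ≤ cg i (w i) := by
      intro i _
      have he : cg i (w i) = (rad i + ε - σ) * (cg i (v i)) := by
        rw [hw]; simp only; rw [map_smul]; simp [smul_eq_mul]
      rw [he]
      have h1 := hv2 i
      have h2 : (0:ℝ) ≤ rad i + ε - σ := by have := hrad0 i; linarith
      nlinarith [norm_nonneg (cg i), hrad0 i]
    have hsum := Finset.sum_le_sum hterm
    rw [Finset.sum_sub_distrib, ← Finset.mul_sum] at hsum
    rw [← hM] at hsum
    linarith
  -- key inequality
  set gY : ↥Y →L[ℝ] ℝ := g.comp Y.subtypeL with hgY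
  have hkg : |Φ g| ≤ ‖gY‖ := by
    have h1 := biann_key Y hΦb g
    nlinarith [norm_nonneg gY, norm_nonneg Φ]
  -- Φ estimate
  have hΦsum : Φ g - c ≤ ∑ i, rad i * ‖cg i‖ := by
    have h1 : Φ g - c = ∑ i, ((Φ - J (x i)) (cg i)) := by
      rw [hg, map_sum, hc, ← Finset.sum_sub_distrib]
      refine Finset.sum_congr rfl fun i _ => ?_
      rw [ContinuousLinearMap.sub_apply]
      congr 1
    rw [h1]
    refine Finset.sum_le_sum fun i _ => ?_
    have h2 := (Φ - J (x i)).le_opNorm (cg i)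
    have h3 : ‖(Φ - J (x i)) (cg i)‖ ≤ rad i * ‖cg i‖ := by
      refine h2.trans ?_
      exact mul_le_mul_of_nonneg_right (hrad i) (norm_nonneg _)
    calc (Φ - J (x i)) (cg i) ≤ ‖(Φ - J (x i)) (cg i)‖ := le_abs_self _
      _ ≤ rad i * ‖cg i‖ := h3
  -- contradiction
  have hfinal : ∀ σ : ℝ, 0 < σ → σ < ε → ε * S ≤ σ * (M + 1) := by
    intro σ hσ0 hσε
    obtain ⟨vy, hvy1, hvy2⟩ := dual_attain (-gY) hσ0
    have hyY : (vy : X) ∈ Y := vy.2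
    have hyn : ‖(vy : X)‖ ≤ 1 := hvy1
    have hgvy : g (vy : X) = gY vy := rfl
    have hA1 := hAy (vy : X) hyY hyn
    rw [hgvy] at hA1
    have h4 : gY vy ≤ -‖gY‖ + σ := by
      rw [norm_neg] at hvy2
      have : (-gY) vy = -(gY vy) := rfl
      rw [this] at hvy2
      linarith
    have h5 : -‖gY‖ ≤ Φ g := by
      have := abs_le.mp hkg
      linarith [this.1]
    have h6 := hBside σ hσ0 hσε
    have h7 : ∑ i, (rad i + ε) * ‖cg i‖ = (∑ i, rad i * ‖cg i‖) + ε * S := by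
      rw [hS, Finset.mul_sum, ← Finset.sum_add_distrib]
      exact Finset.sum_congr rfl fun i _ => by ring
    have h8 : Φ g - c ≥ (∑ i, (rad i + ε) * ‖cg i‖) - σ * M - σ := by
      have : u ≥ (∑ i, (rad i + ε) * ‖cg i‖) - σ * M := by linarith
      linarith
    rw [h7] at h8
    linarith [hΦsum]
  rcases eq_or_lt_of_le hS0 with hSz | hSp
  · have hz : ∀ i ∈ Finset.univ, ‖cg i‖ = 0 := by
      intro i _
      have h1 : ∑ i, ‖cg i‖ = 0 := hSz.symm
      have := (Finset.sum_eq_zero_iff_of_nonneg fun i _ => norm_nonneg (cg i)).mp h1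
      exact this i (Finset.mem_univ i)
    have hcg0 : ∀ i, cg i = 0 := fun i => norm_eq_zero.mp (hz i (Finset.mem_univ i))
    have hc0 : c = 0 := by
      rw [hc]
      exact Finset.sum_eq_zero fun i _ => by rw [hcg0 i]; rfl
    have hg0 : g (0 : X) = 0 := map_zero g
    have hu1 : u + c ≤ 0 := by
      have := hAy 0 Y.zero_mem (by simp)
      rw [hg0] at this
      exact this
    have h0B : (0 : ι → X) ∈ Bs := by
      rw [hBs, Set.mem_univ_pi]
      intro i
      rw [mem_ball_zero_iff]
      show ‖(0:X)‖ < rad i + ε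
      rw [norm_zero]
      have := hrad0 i; linarith
    have := hfB 0 h0B
    rw [map_zero] at this
    linarith
  · set σ₀ : ℝ := min (ε / 2) (ε * S / (2 * (M + 1))) with hσ₀
    have hM1 : (0:ℝ) < M + 1 := by linarith
    have hσ₀0 : 0 < σ₀ := by
      apply lt_min
      · linarith
      · positivity
    have hσ₀ε : σ₀ < ε := lt_of_le_of_lt (min_le_left _ _) (by linarith)
    have h1 := hfinal σ₀ hσ₀0 hσ₀ε
    have h2 : σ₀ ≤ ε * S / (2 * (M + 1)) := min_le_right _ _
    have h3 : σ₀ * (M + 1) ≤ ε * S / 2 := by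
      have h4 := mul_le_mul_of_nonneg_right h2 (le_of_lt hM1)
      calc σ₀ * (M + 1) ≤ ε * S / (2 * (M + 1)) * (M + 1) := h4
        _ = ε * S / 2 := by field_simp
    have h5 : 0 < ε * S := mul_pos hε hSp
    linarith

/-- Compact version of `lemA`, with an extra anchor point `z`. -/
lemma lemB (Y : Submodule ℝ X)
    {Φ : StrongDual ℝ (StrongDual ℝ X)} (hΦb : Φ ∈ biann Y) (hΦn : ‖Φ‖ ≤ 1)
    {F : Set X} (hFc : IsCompact F)
    {s : ℝ} (hs : ∀ x ∈ F, ‖Φ - inclusionInDoubleDual ℝ X x‖ ≤ s)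
    (z : X) {ρ : ℝ} (hz : ‖Φ - inclusionInDoubleDual ℝ X z‖ ≤ ρ)
    {ε : ℝ} (hε : 0 < ε) :
    ∃ y, y ∈ Y ∧ ‖y‖ ≤ 1 ∧ (∀ x ∈ F, ‖y - x‖ ≤ s + ε) ∧ ‖y - z‖ ≤ ρ + ε := by
  classical
  obtain ⟨t, ht⟩ := hFc.elim_finite_subcover (fun p : ↥F => Metric.ball (p : X) (ε / 2))
    (fun _ => isOpen_ball) (fun x hx => mem_iUnion.2 ⟨⟨x, hx⟩, mem_ball_self (by positivity)⟩)
  set x' : Option ↥t → X := fun o => o.elim z (fun i => ((i : ↥F) : X)) with hx'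
  set rad' : Option ↥t → ℝ := fun o => o.elim ρ (fun _ => s) with hrad'
  have hr : ∀ o, ‖Φ - inclusionInDoubleDual ℝ X (x' o)‖ ≤ rad' o := by
    rintro (_ | i)
    · exact hz
    · exact hs _ (i : ↥F).2
  obtain ⟨y, hyY, hy1, hy⟩ := lemA Y hΦb hΦn (ι := Option ↥t) x' rad' hr (half_pos hε)
  refine ⟨y, hyY, hy1, ?_, ?_⟩
  · intro x hx
    have := ht hx
    rw [mem_iUnion₂] at this
    obtain ⟨i, hit, hxi⟩ := this
    have h1 := hy (some ⟨i, hit⟩)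
    have h2 : dist x (i : X) < ε / 2 := mem_ball.mp hxi
    rw [dist_eq_norm] at h2
    calc ‖y - x‖ = ‖(y - (i : X)) + ((i : X) - x)‖ := by rw [sub_add_sub_cancel]
      _ ≤ ‖y - (i : X)‖ + ‖(i : X) - x‖ := norm_add_le _ _
      _ ≤ (s + ε / 2) + ε / 2 := by
          have h3 : ‖(i : X) - x‖ = ‖x - (i : X)‖ := norm_sub_rev _ _
          rw [h3]
          exact add_le_add h1 h2.le
      _ = s + ε := by ring
  · have := hy none
    calc ‖y - z‖ ≤ ρ + ε / 2 := this
      _ ≤ ρ + ε := by linarith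

end Dual

open NormedSpace in
/-- if `(X**, B_{Y⊥⊥}, K(X))` has property-(P₁) then so does `(X, B_Y, K(X))`. -/
theorem stmt_10 {X : Type*} [NormedAddCommGroup X] [NormedSpace ℝ X] [CompleteSpace X]
    (Y : Submodule ℝ X) (hYc : IsClosed (Y : Set X))
    (hP1 : ∀ F : Set X, F.Nonempty → IsCompact F →
      propP1 (biann Y ∩ closedBall 0 1) (inclusionInDoubleDual ℝ X '' F)) :
    ∀ F : Set X, F.Nonempty → IsCompact F →
      propP1 ((Y : Set X) ∩ closedBall 0 1) F := by
  intro F hFne hFc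
  classical
  set J := inclusionInDoubleDual ℝ X with hJdef
  set V : Set X := (Y : Set X) ∩ closedBall 0 1 with hV
  set W : Set (StrongDual ℝ (StrongDual ℝ X)) := biann Y ∩ closedBall 0 1 with hW
  set FJ : Set (StrongDual ℝ (StrongDual ℝ X)) := J '' F with hFJ
  have hVne : V.Nonempty := ⟨0, ⟨Y.zero_mem, by simp⟩⟩
  have hzb : (0 : StrongDual ℝ (StrongDual ℝ X)) ∈ biann Y := fun f _ => rfl
  have hWne : W.Nonempty := ⟨0, ⟨hzb, by simp⟩⟩
  haveI : Nonempty V := hVne.to_subtype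
  haveI : Nonempty W := hWne.to_subtype
  have hFb : ∃ M, ∀ b ∈ F, ‖b‖ ≤ M := by
    exact isBounded_iff_forall_norm_le.mp hFc.isBounded
  have hFJb : ∃ M, ∀ b ∈ FJ, ‖b‖ ≤ M := by
    obtain ⟨M, hM⟩ := hFb
    refine ⟨M, ?_⟩
    rintro b ⟨x0, hx0, rfl⟩
    rw [show ‖J x0‖ = ‖x0‖ from Jnorm x0]
    exact hM x0 hx0
  have hmemFJ : ∀ x ∈ F, J x ∈ FJ := fun x hx => by
    rw [hFJ]; exact mem_image_of_mem _ hx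
  set r : ℝ := chebRad V F with hr
  set R : ℝ := chebRad W FJ with hR
  have hJmem : ∀ v ∈ V, J v ∈ W := by
    intro v hv
    refine ⟨fun f hf => ?_, ?_⟩
    · show J v f = 0
      rw [hJdef, NormedSpace.dual_def]
      exact hf v hv.1
    · rw [mem_closedBall_zero_iff (a := J v), Jnorm]
      exact mem_closedBall_zero_iff.mp hv.2
  have hchebJ : ∀ v : X, chebR (J v) FJ = chebR v F := fun v => chebR_image v F
  -- The radii agree.
  have hRr : R ≤ r := by
    rw [hr, chebRad]
    refine le_ciInf fun v => ?_
    rw [← hchebJ v]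
    exact chebRad_le' (hJmem v v.2)
  have hrR : r ≤ R := by
    refine le_of_forall_pos_le_add fun ε hε => ?_
    have hlt : R < R + ε / 2 := by linarith
    obtain ⟨⟨w, hwW⟩, hwlt⟩ := exists_lt_of_ciInf_lt hlt
    have hwn : ‖w‖ ≤ 1 := (mem_closedBall_zero_iff (a := w)).mp hwW.2
    have hws : ∀ x ∈ F, ‖w - J x‖ ≤ R + ε / 2 := by
      intro x hx
      exact le_trans (le_chebR' hFJb (hmemFJ x hx)) hwlt.le
    have hwz : ‖w - J 0‖ ≤ 1 + R + ε / 2 := by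
      rw [map_zero, sub_zero w]
      have := chebR_nonneg w FJ
      linarith
    obtain ⟨y, hyY, hy1, hyF, _⟩ :=
      lemB Y hwW.1 hwn hFc hws 0 hwz (half_pos hε)
    have hyV : y ∈ V := ⟨hyY, mem_closedBall_zero_iff.mpr hy1⟩
    have : chebR y F ≤ R + ε := by
      refine chebR_le' hFne fun b hb => ?_
      have := hyF b hb
      linarith
    exact le_trans (chebRad_le' hyV) this
  have hrReq : r = R := le_antisymm hrR hRr
  -- the one-step improvement
  have hstep : ∀ η : ℝ, 0 < η → ∃ δ : ℝ, 0 < δ ∧ δ ≤ η ∧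
      ∀ z ∈ V, chebR z F ≤ r + δ → ∀ μ : ℝ, 0 < μ →
        ∃ y ∈ V, chebR y F ≤ r + μ ∧ ‖y - z‖ ≤ 2 * η := by
    intro η hη
    obtain ⟨δ', hδ', hsub⟩ := (hP1 F hFne hFc).2 η hη
    refine ⟨min δ' η, lt_min hδ' hη, min_le_right _ _, ?_⟩
    intro z hz hzr μ hμ
    have hJz : J z ∈ chebCentA W FJ δ' := by
      refine ⟨hJmem z hz, ?_⟩
      rw [hchebJ]
      have h1 : chebRad W FJ = R := hR.symm
      rw [h1, ← hrReq]
      have := min_le_left δ' η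
      linarith
    have hmem := hsub hJz
    rw [Set.mem_add] at hmem
    obtain ⟨Φ, hΦc, e, he, hsum⟩ := hmem
    have heb : ‖e‖ ≤ η := by
      obtain ⟨b, hb, rfl⟩ := he
      rw [@norm_smul _ _ _ _ _ NormedSpace.toNormSMulClass, Real.norm_eq_abs, abs_of_pos hη]
      have := (mem_closedBall_zero_iff (a := b)).mp hb
      nlinarith
    have hΦJz : ‖Φ - J z‖ ≤ η := by
      have h1 : Φ - J z = -e := by rw [← hsum]; abel
      rw [h1, norm_neg e]
      exact heb
    have hΦW : Φ ∈ W := hΦc.1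
    have hΦR : chebR Φ FJ ≤ R := by
      have := hΦc.2
      rw [← hR] at this
      exact this
    have hΦb : Φ ∈ biann Y := hΦW.1
    have hΦn : ‖Φ‖ ≤ 1 := (mem_closedBall_zero_iff (a := Φ)).mp hΦW.2
    have hs' : ∀ x ∈ F, ‖Φ - J x‖ ≤ R := fun x hx =>
      le_trans (le_chebR' hFJb (hmemFJ x hx)) hΦR
    have hμη : (0:ℝ) < min μ η := lt_min hμ hη
    obtain ⟨y, hyY, hy1, hyF, hyz⟩ := lemB Y hΦb hΦn hFc hs' z hΦJz hμη
    refine ⟨y, ⟨hyY, mem_closedBall_zero_iff.mpr hy1⟩, ?_, ?_⟩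
    · refine chebR_le' hFne fun b hb => ?_
      have h1 := hyF b hb
      have h2 : min μ η ≤ μ := min_le_left _ _
      rw [hrReq]
      linarith
    · have h2 : min μ η ≤ η := min_le_right _ _
      linarith
  -- the iteration
  have hC : ∀ θ : ℝ, 0 < θ → ∃ δ : ℝ, 0 < δ ∧
      ∀ z ∈ V, chebR z F ≤ r + δ → ∃ y, y ∈ chebCent V F ∧ ‖y - z‖ ≤ θ := by
    intro θ hθ
    have hη : ∀ n : ℕ, (0:ℝ) < θ / 8 * (1 / 2) ^ n := fun n => by positivity
    choose d hd0 hdle hdp using fun n : ℕ => hstep (θ / 8 * (1 / 2) ^ n) (hη n)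
    refine ⟨d 0, hd0 0, ?_⟩
    intro z hz hzr
    have step' : ∀ (n : ℕ) (p : {x : X // x ∈ V ∧ chebR x F ≤ r + d n}),
        ∃ y : X, (y ∈ V ∧ chebR y F ≤ r + d (n + 1)) ∧
          ‖y - p.1‖ ≤ 2 * (θ / 8 * (1 / 2) ^ n) := by
      intro n p
      obtain ⟨y, hyV, h1, h2⟩ := hdp n p.1 p.2.1 p.2.2 (d (n + 1)) (hd0 (n + 1))
      exact ⟨y, ⟨hyV, h1⟩, h2⟩
    let fseq : ∀ n : ℕ, {x : X // x ∈ V ∧ chebR x F ≤ r + d n} := fun n =>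
      Nat.rec ⟨z, hz, hzr⟩ (fun n p => ⟨(step' n p).choose, (step' n p).choose_spec.1⟩) n
    have hfd : ∀ n : ℕ, ‖(fseq (n + 1)).1 - (fseq n).1‖ ≤ 2 * (θ / 8 * (1 / 2) ^ n) := by
      intro n
      exact (step' n (fseq n)).choose_spec.2
    have hgeo : ∀ n : ℕ, dist (fseq n).1 (fseq (n + 1)).1 ≤ (θ / 4) * (1 / 2) ^ n := by
      intro n
      rw [dist_eq_norm, norm_sub_rev]
      have := hfd n
      calc ‖(fseq (n + 1)).1 - (fseq n).1‖ ≤ 2 * (θ / 8 * (1 / 2) ^ n) := this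
        _ = (θ / 4) * (1 / 2) ^ n := by ring
    have hcau : CauchySeq (fun n => (fseq n).1) :=
      cauchySeq_of_le_geometric (1 / 2) (θ / 4) (by norm_num) hgeo
    obtain ⟨y, hy⟩ := cauchySeq_tendsto_of_complete hcau
    have hVc : IsClosed V := hYc.inter isClosed_closedBall
    have hyV : y ∈ V :=
      hVc.mem_of_tendsto hy (Filter.Eventually.of_forall fun n => (fseq n).2.1)
    have hyr : chebR y F ≤ r := by
      refine chebR_le' hFne fun b hb => ?_
      have hn : ∀ n : ℕ, ‖(fseq n).1 - b‖ ≤ r + θ / 8 * (1 / 2) ^ n := by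
        intro n
        have h1 : ‖(fseq n).1 - b‖ ≤ chebR (fseq n).1 F := le_chebR' hFb hb
        have h2 := (fseq n).2.2
        have h3 := hdle n
        linarith
      have h1 : Filter.Tendsto (fun n => ‖(fseq n).1 - b‖) Filter.atTop (nhds ‖y - b‖) :=
        ((hy.sub tendsto_const_nhds).norm)
      have h2 : Filter.Tendsto (fun n : ℕ => r + θ / 8 * (1 / 2) ^ n) Filter.atTop
          (nhds (r + θ / 8 * 0)) := by
        refine Filter.Tendsto.add tendsto_const_nhds (Filter.Tendsto.const_mul _ ?_)
        exact tendsto_pow_atTop_nhds_zero_of_lt_one (by norm_num) (by norm_num)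
      rw [mul_zero, add_zero] at h2
      exact le_of_tendsto_of_tendsto' h1 h2 hn
    have hdist : ‖y - z‖ ≤ θ := by
      have h1 : dist (fseq 0).1 y ≤ (θ / 4) / (1 - 1 / 2) :=
        dist_le_of_le_geometric_of_tendsto₀ (1 / 2) (θ / 4) (by norm_num) hgeo hy
      have h2 : (fseq 0).1 = z := rfl
      rw [h2, dist_eq_norm, norm_sub_rev] at h1
      calc ‖y - z‖ ≤ (θ / 4) / (1 - 1 / 2) := h1
        _ = θ / 2 := by ring
        _ ≤ θ := by linarith
    exact ⟨y, ⟨hyV, hyr⟩, hdist⟩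
  constructor
  · obtain ⟨δ, hδ, hC1⟩ := hC 1 one_pos
    have hlt : chebRad V F < chebRad V F + δ := by linarith
    obtain ⟨⟨v, hv⟩, hvlt⟩ := exists_lt_of_ciInf_lt hlt
    obtain ⟨y, hy, _⟩ := hC1 v hv hvlt.le
    exact ⟨y, hy⟩
  · intro ε hε
    obtain ⟨δ, hδ, hCe⟩ := hC ε hε
    refine ⟨δ, hδ, ?_⟩
    rintro v ⟨hvV, hvr⟩
    obtain ⟨y, hyc, hyd⟩ := hCe v hvV hvr
    rw [Set.mem_add]
    refine ⟨y, hyc, v - y, ?_, by abel⟩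
    rw [Set.mem_smul_set]
    refine ⟨ε⁻¹ • (v - y), ?_, by rw [smul_inv_smul₀ hε.ne']⟩
    rw [mem_closedBall_zero_iff, norm_smul, Real.norm_eq_abs, abs_of_pos (inv_pos.2 hε)]
    have h1 : ‖v - y‖ ≤ ε := by rw [norm_sub_rev]; exact hyd
    rw [inv_mul_le_iff₀ hε]
    linarith
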